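/- Let x = (xₙ) ∈ ℓ∞ and s ∈ ℝ. Then L(x) = s for every Banach limit L if and only if limₘ→∞ (1/m) Σⱼ₌₀^{m−1} x_{n+j} = s uniformly in n, i.e. for every ε > 0 there exists M such that for all m ≥ M and all n ≥ 1, |(1/m) Σⱼ₌₀^{m−1} x_{n+j} − s| < ε. -/

import Mathlib

set_option maxHeartbeats 1000000

noncomputable section
open scoped ENNReal

/-- `ℓ∞`: the Banach space of bounded real sequences with the sup norm. -/
abbrev Linf : Type := lp (fun _ : ℕ => ℝ) ∞

/-- The left shift `(x₁,x₂,x₃,…) ↦ (x₂,x₃,x₄,…)` on `ℓ∞`. -/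
def shiftSeq (x : Linf) : Linf :=
  ⟨fun n => x (n + 1), memℓp_infty ⟨‖x‖, by
    rintro r ⟨n, rfl⟩
    exact lp.norm_apply_le_norm ENNReal.top_ne_zero x (n + 1)⟩⟩

/-- The constant sequence `e = (1,1,1,…)` in `ℓ∞`. -/
def onesSeq : Linf :=
  ⟨fun _ => 1, memℓp_infty ⟨1, by rintro r ⟨n, rfl⟩; simp⟩⟩

/-- A Banach limit: a positive, shift-invariant continuous linear functional `L` on `ℓ∞`
with `L(1,1,1,…) = 1`. -/
def IsBanachLimit (L : StrongDual ℝ Linf) : Prop :=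
  (∀ x : Linf, (∀ n, 0 ≤ x n) → 0 ≤ L x) ∧
  (∀ x : Linf, L (shiftSeq x) = L x) ∧
  L onesSeq = 1

namespace AlmostConv

open Finset

lemma eps_le {a b : ℝ} (h : ∀ ε > (0:ℝ), a ≤ b + ε) : a ≤ b := by
  by_contra hab
  push_neg at hab
  have := h ((a - b)/2) (by linarith)
  linarith

lemma onesSeq_apply (n : ℕ) : (onesSeq : Linf) n = 1 := rfl

lemma shiftSeq_apply (y : Linf) (n : ℕ) : (shiftSeq y) n = y (n + 1) := rfl

lemma onesSeq_ne_zero : (onesSeq : Linf) ≠ 0 := by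
  intro h
  have h1 : (1:ℝ) = 0 := by
    calc (1:ℝ) = onesSeq 0 := rfl
      _ = (0 : Linf) 0 := by rw [h]
      _ = 0 := by rw [lp.coeFn_zero]; rfl
  exact one_ne_zero h1

instance : Nontrivial Linf := ⟨⟨onesSeq, 0, onesSeq_ne_zero⟩⟩

lemma abs_coe_le (y : Linf) (n : ℕ) : |y n| ≤ ‖y‖ := by
  have := lp.norm_apply_le_norm ENNReal.top_ne_zero y n
  rwa [Real.norm_eq_abs] at this

/-- partial sums of shifted sequence -/
def S (y : Linf) (m n : ℕ) : ℝ := ∑ j ∈ Finset.range m, y (n + j)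

/-- Cesàro averages -/
def avg (y : Linf) (m n : ℕ) : ℝ := S y m n / m

lemma abs_S_le (y : Linf) (m n : ℕ) : |S y m n| ≤ m * ‖y‖ := by
  calc |S y m n| ≤ ∑ j ∈ Finset.range m, |y (n + j)| :=
        Finset.abs_sum_le_sum_abs _ _
    _ ≤ ∑ _j ∈ Finset.range m, ‖y‖ :=
        Finset.sum_le_sum fun j _ => abs_coe_le y (n + j)
    _ = m * ‖y‖ := by
        rw [Finset.sum_const, Finset.card_range, nsmul_eq_mul]

lemma abs_avg_le (y : Linf) (m n : ℕ) : |avg y m n| ≤ ‖y‖ := by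
  rcases Nat.eq_zero_or_pos m with hm | hm
  · subst hm
    have h0 : avg y 0 n = 0 := by
      unfold avg S
      rw [Finset.range_zero, Finset.sum_empty, zero_div]
    rw [h0, abs_zero]
    exact norm_nonneg y
  · have hm' : (0:ℝ) < m := by exact_mod_cast hm
    rw [avg, abs_div, abs_of_pos hm', div_le_iff₀ hm']
    calc |S y m n| ≤ m * ‖y‖ := abs_S_le y m n
      _ = ‖y‖ * m := mul_comm _ _

/-- sup over shifts of the Cesàro average -/
def sA (y : Linf) (m : ℕ) : ℝ := ⨆ n, avg y m n

lemma bddAbove_avg (y : Linf) (m : ℕ) : BddAbove (Set.range fun n => avg y m n) := by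
  refine ⟨‖y‖, ?_⟩
  rintro r ⟨n, rfl⟩
  exact (abs_le.1 (abs_avg_le y m n)).2

lemma avg_le_sA (y : Linf) (m n : ℕ) : avg y m n ≤ sA y m :=
  le_ciSup (bddAbove_avg y m) n

lemma sA_le (y : Linf) (m : ℕ) {c : ℝ} (h : ∀ n, avg y m n ≤ c) : sA y m ≤ c :=
  ciSup_le h

lemma sA_le_norm (y : Linf) (m : ℕ) : sA y m ≤ ‖y‖ :=
  sA_le y m fun n => (abs_le.1 (abs_avg_le y m n)).2

lemma neg_norm_le_sA (y : Linf) (m : ℕ) : -‖y‖ ≤ sA y m :=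
  le_trans (abs_le.1 (abs_avg_le y m 0)).1 (avg_le_sA y m 0)

/-- the sublinear functional `p y = inf_m sup_n avg y m n` -/
def p (y : Linf) : ℝ := ⨅ m : ℕ, sA y (m + 1)

lemma bddBelow_sA (y : Linf) : BddBelow (Set.range fun m : ℕ => sA y (m + 1)) := by
  refine ⟨-‖y‖, ?_⟩
  rintro r ⟨m, rfl⟩
  exact neg_norm_le_sA y (m + 1)

lemma p_le_sA (y : Linf) (m : ℕ) : p y ≤ sA y (m + 1) :=
  ciInf_le (bddBelow_sA y) m

lemma p_le_norm (y : Linf) : p y ≤ ‖y‖ :=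
  (p_le_sA y 0).trans (sA_le_norm y 1)

lemma S_add (y : Linf) (a b n : ℕ) : S y (a + b) n = S y a n + S y b (n + a) := by
  unfold S
  rw [Finset.sum_range_add]
  congr 1
  refine Finset.sum_congr rfl fun j _ => ?_
  rw [add_assoc]

lemma S_mul (y : Linf) (a b n : ℕ) :
    S y (a * b) n = ∑ i ∈ Finset.range a, S y b (n + i * b) := by
  induction a with
  | zero => simp [S]
  | succ a ih =>
      rw [Nat.succ_mul, S_add, ih, Finset.sum_range_succ]

lemma S_eq_mul_avg (y : Linf) {m : ℕ} (hm : 0 < m) (n : ℕ) :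
    S y m n = m * avg y m n := by
  have hm' : (m:ℝ) ≠ 0 := by positivity
  rw [avg, mul_div_cancel₀ _ hm']

lemma sA_mul_le (y : Linf) {a b : ℕ} (ha : 0 < a) (hb : 0 < b) :
    sA y (a * b) ≤ sA y b := by
  refine sA_le _ _ fun n => ?_
  have hab : (0:ℝ) < (a*b : ℕ) := by positivity
  rw [avg, div_le_iff₀ hab]
  rw [S_mul]
  calc ∑ i ∈ Finset.range a, S y b (n + i * b)
      ≤ ∑ _i ∈ Finset.range a, (b : ℝ) * sA y b := by
        refine Finset.sum_le_sum fun i _ => ?_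
        rw [S_eq_mul_avg y hb]
        exact mul_le_mul_of_nonneg_left (avg_le_sA y b _) (by positivity)
    _ = (a : ℝ) * ((b:ℝ) * sA y b) := by
        rw [Finset.sum_const, Finset.card_range, nsmul_eq_mul]
    _ = sA y b * (a*b : ℕ) := by push_cast; ring

lemma exists_sA_lt (y : Linf) {c : ℝ} (h : p y < c) : ∃ m : ℕ, 0 < m ∧ sA y m < c := by
  obtain ⟨m, hm⟩ := exists_lt_of_ciInf_lt h
  exact ⟨m + 1, Nat.succ_pos m, hm⟩

lemma p_le_sA' (y : Linf) {m : ℕ} (hm : 0 < m) : p y ≤ sA y m := by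
  obtain ⟨k, rfl⟩ := Nat.exists_eq_add_of_lt hm
  simpa [Nat.add_comm] using p_le_sA y k

lemma avg_add (y z : Linf) (m n : ℕ) : avg (y + z) m n = avg y m n + avg z m n := by
  unfold avg S
  rw [← add_div]
  congr 1
  rw [← Finset.sum_add_distrib]
  refine Finset.sum_congr rfl fun j _ => ?_
  simp [lp.coeFn_add]

lemma p_add_le (y z : Linf) : p (y + z) ≤ p y + p z := by
  refine eps_le fun ε hε => ?_
  obtain ⟨b₁, hb₁, h₁⟩ := exists_sA_lt y (show p y < p y + ε/2 by linarith)
  obtain ⟨b₂, hb₂, h₂⟩ := exists_sA_lt z (show p z < p z + ε/2 by linarith)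
  have key : p (y + z) ≤ sA (y + z) (b₁ * b₂) := p_le_sA' _ (by positivity)
  have h3 : sA (y + z) (b₁ * b₂) ≤ sA y b₁ + sA z b₂ := by
    refine sA_le _ _ fun n => ?_
    rw [avg_add]
    have e1 : avg y (b₁ * b₂) n ≤ sA y b₁ := by
      refine le_trans (avg_le_sA _ _ _) ?_
      rw [mul_comm]
      exact sA_mul_le y hb₂ hb₁
    have e2 : avg z (b₁ * b₂) n ≤ sA z b₂ :=
      le_trans (avg_le_sA _ _ _) (sA_mul_le z hb₁ hb₂)
    linarith
  linarith

lemma avg_smul (c : ℝ) (y : Linf) (m n : ℕ) : avg (c • y) m n = c * avg y m n := by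
  unfold avg S
  rw [← mul_div_assoc]
  congr 1
  rw [Finset.mul_sum]
  refine Finset.sum_congr rfl fun j _ => ?_
  simp [lp.coeFn_smul]

lemma p_smul {c : ℝ} (hc : 0 < c) (y : Linf) : p (c • y) = c * p y := by
  unfold p sA
  rw [Real.mul_iInf_of_nonneg hc.le]
  refine iInf_congr fun m => ?_
  rw [Real.mul_iSup_of_nonneg hc.le]
  exact iSup_congr fun n => avg_smul c y (m+1) n

lemma avg_zero (m n : ℕ) : avg (0 : Linf) m n = 0 := by
  unfold avg S
  simp [lp.coeFn_zero]

lemma p_zero : p (0 : Linf) = 0 := by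
  unfold p sA
  simp [avg_zero, ciSup_const, ciInf_const]

lemma neg_p_neg_le (y : Linf) : -p (-y) ≤ p y := by
  have h := p_add_le y (-y)
  rw [add_neg_cancel, p_zero] at h
  linarith

lemma avg_neg (y : Linf) (m n : ℕ) : avg (-y) m n = -avg y m n := by
  unfold avg S
  rw [← neg_div]
  congr 1
  rw [← Finset.sum_neg_distrib]
  refine Finset.sum_congr rfl fun j _ => ?_
  simp [lp.coeFn_neg]

lemma p_nonpos_of_avg_bound (z : Linf) (C : ℝ) (hC : 0 ≤ C)
    (h : ∀ m n : ℕ, |avg z (m + 1) n| ≤ C / ((m:ℝ) + 1)) : p z ≤ 0 := by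
  refine eps_le fun ε hε => ?_
  obtain ⟨m, hm⟩ := exists_nat_gt (C / ε)
  have hm1 : C / ε < (m:ℝ) + 1 := by linarith [Nat.cast_nonneg (α := ℝ) m]
  have hmpos : (0:ℝ) < (m:ℝ) + 1 := by positivity
  have key : C / ((m:ℝ) + 1) < ε := by
    rw [div_lt_iff₀ hmpos]
    have := (div_lt_iff₀ hε).1 hm1
    linarith
  have h1 : p z ≤ sA z (m + 1) := p_le_sA z m
  have h2 : sA z (m + 1) ≤ C / ((m:ℝ) + 1) := by
    refine sA_le _ _ fun n => ?_
    exact (abs_le.1 (h m n)).2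
  linarith

lemma S_shift_sub (y : Linf) (m n : ℕ) :
    S (shiftSeq y - y) m n = y (n + m) - y n := by
  unfold S
  have hterm : ∀ j ∈ Finset.range m,
      (shiftSeq y - y) (n + j) = y (n + j + 1) - y (n + j) := by
    intro j _
    simp [lp.coeFn_sub, shiftSeq_apply]
  rw [Finset.sum_congr rfl hterm]
  exact Finset.sum_range_sub (fun j => y (n + j)) m

lemma abs_avg_shift_sub (y : Linf) (m n : ℕ) :
    |avg (shiftSeq y - y) (m + 1) n| ≤ 2 * ‖y‖ / ((m:ℝ) + 1) := by
  have hmpos : (0:ℝ) < (m:ℝ) + 1 := by positivity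
  have hcast : ((m + 1 : ℕ) : ℝ) = (m:ℝ) + 1 := by push_cast; ring
  rw [avg, S_shift_sub, abs_div, hcast, abs_of_pos hmpos]
  have htri : |y (n + (m+1)) - y n| ≤ 2 * ‖y‖ := by
    have h1 := abs_coe_le y (n + (m+1))
    have h2 := abs_coe_le y n
    rw [sub_eq_add_neg]
    refine (abs_add_le _ _).trans ?_
    rw [abs_neg]
    linarith
  gcongr

lemma p_shift_sub_nonpos (y : Linf) : p (shiftSeq y - y) ≤ 0 := by
  refine p_nonpos_of_avg_bound _ (2 * ‖y‖) (by positivity) fun m n => abs_avg_shift_sub y m n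

lemma p_sub_shift_nonpos (y : Linf) : p (y - shiftSeq y) ≤ 0 := by
  have hmy : y - shiftSeq y = -(shiftSeq y - y) := by abel
  rw [hmy]
  refine p_nonpos_of_avg_bound _ (2 * ‖y‖) (by positivity) fun m n => ?_
  rw [avg_neg, abs_neg]
  exact abs_avg_shift_sub y m n

lemma avg_ones {m : ℕ} (hm : 0 < m) (n : ℕ) : avg onesSeq m n = 1 := by
  have hm' : (m:ℝ) ≠ 0 := by positivity
  have hS : S onesSeq m n = m := by
    unfold S
    simp [onesSeq_apply]
  rw [avg, hS, div_self hm']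

lemma p_ones : p onesSeq = 1 := by
  unfold p sA
  have h : ∀ m : ℕ, (⨆ n, avg onesSeq (m+1) n) = 1 := by
    intro m
    have he : (fun n : ℕ => avg onesSeq (m+1) n) = fun _ => (1:ℝ) := by
      funext n; exact avg_ones (Nat.succ_pos m) n
    rw [he, ciSup_const]
  simp only [h, ciInf_const]

lemma p_neg_ones : p (-onesSeq) = -1 := by
  unfold p sA
  have h : ∀ m : ℕ, (⨆ n, avg (-onesSeq) (m+1) n) = -1 := by
    intro m
    have he : (fun n : ℕ => avg (-onesSeq) (m+1) n) = fun _ => (-1:ℝ) := by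
      funext n; rw [avg_neg, avg_ones (Nat.succ_pos m) n]
    rw [he, ciSup_const]
  simp only [h, ciInf_const]

/-- Hahn–Banach step: a Banach limit attaining `p` at `x`. -/
lemma exists_banachLimit_aux (x : Linf) (hx : x ≠ 0) :
    ∃ L : StrongDual ℝ Linf, IsBanachLimit L ∧ L x = p x := by
  set f : Linf →ₗ.[ℝ] ℝ := LinearPMap.mkSpanSingleton x (p x) hx with hf
  have hfle : ∀ z : f.domain, f z ≤ p z := by
    intro z
    obtain ⟨c, hc⟩ := Submodule.mem_span_singleton.1 z.2
    have hmem : c • x ∈ f.domain := by rw [hc]; exact z.2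
    have hzz : z = ⟨c • x, hmem⟩ := Subtype.ext hc.symm
    have h1 : f z = c * p x := by
      rw [hzz]
      exact (LinearPMap.mkSpanSingleton'_apply x (p x) _ c hmem).trans (by rw [smul_eq_mul, RingHom.id_apply])
    have h2 : p (z : Linf) = p (c • x) := by rw [← hc]
    rw [h1, h2]
    rcases lt_trichotomy c 0 with hc0 | hc0 | hc0
    · have hcx : c • x = (-c) • (-x) := by rw [smul_neg, neg_smul, neg_neg]
      rw [hcx, p_smul (by linarith) (-x)]
      have h3 : -p x ≤ p (-x) := by
        have h4 := p_add_le x (-x)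
        rw [add_neg_cancel, p_zero] at h4
        linarith
      nlinarith
    · subst hc0; simp [p_zero]
    · rw [p_smul hc0]
  obtain ⟨g, hg_ext, hg_le⟩ := exists_extension_of_le_sublinear f p
    (fun c hc y => p_smul hc y) p_add_le hfle
  have hx_mem : x ∈ f.domain := Submodule.mem_span_singleton_self x
  have hgx : g x = p x := by
    have h5 := hg_ext ⟨x, hx_mem⟩
    rw [h5]
    exact LinearPMap.mkSpanSingleton_apply ℝ ℝ hx (p x)
  have hbound : ∀ y : Linf, ‖g y‖ ≤ 1 * ‖y‖ := by
    intro y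
    rw [one_mul, Real.norm_eq_abs, abs_le]
    constructor
    · have h6 : g (-y) ≤ p (-y) := hg_le (-y)
      have h7 : p (-y) ≤ ‖-y‖ := p_le_norm (-y)
      rw [map_neg] at h6
      rw [norm_neg] at h7
      linarith
    · exact (hg_le y).trans (p_le_norm y)
  set L : StrongDual ℝ Linf := LinearMap.mkContinuous g 1 hbound with hL
  have hLapp : ∀ y, L y = g y := fun y => rfl
  refine ⟨L, ⟨?_, ?_, ?_⟩, by rw [hLapp, hgx]⟩
  · -- positivity
    intro y hy
    have h1 : g (-y) ≤ p (-y) := hg_le (-y)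
    have h2 : p (-y) ≤ sA (-y) 1 := p_le_sA' (-y) one_pos
    have h3 : sA (-y) 1 ≤ 0 := by
      refine sA_le _ _ fun n => ?_
      rw [avg_neg]
      have h4 : avg y 1 n = y n := by
        unfold avg S
        rw [Finset.sum_range_one, Nat.add_zero]
        norm_num
      rw [h4]
      simpa using hy n
    rw [map_neg] at h1
    rw [hLapp]
    linarith
  · -- shift invariance
    intro y
    have h1 : g (shiftSeq y - y) ≤ 0 := (hg_le _).trans (p_shift_sub_nonpos y)
    have h2 : g (y - shiftSeq y) ≤ 0 := (hg_le _).trans (p_sub_shift_nonpos y)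
    rw [map_sub] at h1 h2
    rw [hLapp, hLapp]
    linarith
  · -- normalization
    have h1 : g onesSeq ≤ 1 := (hg_le _).trans_eq p_ones
    have h2 : g (-onesSeq) ≤ -1 := (hg_le _).trans_eq p_neg_ones
    rw [map_neg] at h2
    rw [hLapp]
    linarith

lemma exists_banachLimit_eq (x : Linf) :
    ∃ L : StrongDual ℝ Linf, IsBanachLimit L ∧ L x = p x := by
  by_cases hx : x = 0
  · obtain ⟨L, hL, -⟩ := exists_banachLimit_aux onesSeq onesSeq_ne_zero
    exact ⟨L, hL, by rw [hx, map_zero, p_zero]⟩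
  · exact exists_banachLimit_aux x hx

/-- Key analytic lemma: if `p y ≤ 0` then the averages are eventually uniformly `< ε`. -/
lemma uniform_avg_lt (y : Linf) (hy : p y ≤ 0) {ε : ℝ} (hε : 0 < ε) :
    ∃ M : ℕ, 1 ≤ M ∧ ∀ m ≥ M, ∀ n : ℕ, avg y m n < ε := by
  obtain ⟨b, hb, hsb⟩ := exists_sA_lt y (lt_of_le_of_lt hy (half_pos hε))
  set C := ‖y‖ with hCdef
  have hC : 0 ≤ C := norm_nonneg y
  refine ⟨⌈2 * (b:ℝ) * C / ε⌉₊ + 1, Nat.le_add_left 1 _, fun m hm n => ?_⟩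
  have hm1 : 1 ≤ m := le_trans (Nat.le_add_left 1 _) hm
  have hmpos : (0:ℝ) < m := by exact_mod_cast hm1
  have hbpos : (0:ℝ) < b := by exact_mod_cast hb
  set q := m / b with hq
  set r := m % b with hr
  have hmeq : b * q + r = m := Nat.div_add_mod m b
  have hrb : r < b := Nat.mod_lt m hb
  have hSm : S y m n = S y (b * q) n + S y r (n + b * q) := by
    conv_lhs => rw [← hmeq]
    exact S_add y (b * q) r n
  have hblock : S y (b * q) n ≤ (q : ℝ) * ((b:ℝ) * (ε / 2)) := by
    rw [mul_comm b q, S_mul]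
    calc ∑ i ∈ Finset.range q, S y b (n + i * b)
        ≤ ∑ _i ∈ Finset.range q, (b:ℝ) * (ε/2) := by
          refine Finset.sum_le_sum fun i _ => ?_
          rw [S_eq_mul_avg y hb]
          exact mul_le_mul_of_nonneg_left
            ((avg_le_sA y b _).trans hsb.le) (by positivity)
      _ = (q:ℝ) * ((b:ℝ) * (ε/2)) := by
          rw [Finset.sum_const, Finset.card_range, nsmul_eq_mul]
  have hrem : S y r (n + b * q) ≤ (b:ℝ) * C := by
    calc S y r (n + b * q) ≤ |S y r (n + b * q)| := le_abs_self _
      _ ≤ (r:ℝ) * C := abs_S_le y r _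
      _ ≤ (b:ℝ) * C := by
          have hrble : (r:ℝ) ≤ (b:ℝ) := by exact_mod_cast hrb.le
          nlinarith
  have hqb_le : (q:ℝ) * (b:ℝ) ≤ (m:ℝ) := by
    have hcast : ((b * q + r : ℕ):ℝ) = (m:ℝ) := by rw [hmeq]
    push_cast at hcast
    nlinarith [Nat.cast_nonneg (α := ℝ) r]
  have hStotal : S y m n ≤ (m:ℝ) * (ε/2) + (b:ℝ) * C := by
    rw [hSm]
    have hh : (q:ℝ) * ((b:ℝ) * (ε/2)) ≤ (m:ℝ) * (ε/2) := by nlinarith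
    linarith
  have hMgt : 2 * (b:ℝ) * C / ε < (m:ℝ) := by
    have h1 : (2 * (b:ℝ) * C / ε) ≤ (⌈2 * (b:ℝ) * C / ε⌉₊ : ℝ) := Nat.le_ceil _
    have h2 : ((⌈2 * (b:ℝ) * C / ε⌉₊ + 1 : ℕ) : ℝ) ≤ (m:ℝ) := by exact_mod_cast hm
    push_cast at h2
    linarith
  have htail : (b:ℝ) * C < (ε/2) * (m:ℝ) := by
    have h3 := (div_lt_iff₀ hε).1 hMgt
    nlinarith
  rw [avg, div_lt_iff₀ hmpos]
  calc S y m n ≤ (m:ℝ) * (ε/2) + (b:ℝ) * C := hStotal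
    _ < (m:ℝ) * (ε/2) + (ε/2) * (m:ℝ) := by linarith
    _ = ε * (m:ℝ) := by ring

lemma avg_sub_smul_ones (x : Linf) (s : ℝ) {m : ℕ} (hm : 0 < m) (n : ℕ) :
    avg (x - s • onesSeq) m n = avg x m n - s := by
  have hm' : (m:ℝ) ≠ 0 := by positivity
  unfold avg S
  have hco : ∀ j ∈ Finset.range m, (x - s • onesSeq) (n + j) = x (n + j) - s := by
    intro j _
    simp only [lp.coeFn_sub, lp.coeFn_smul, Pi.sub_apply, Pi.smul_apply,
      onesSeq_apply, smul_eq_mul, mul_one]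
  rw [Finset.sum_congr rfl hco, Finset.sum_sub_distrib]
  rw [Finset.sum_const, Finset.card_range, nsmul_eq_mul]
  field_simp

lemma p_sub_smul_ones_nonpos (x : Linf) (s : ℝ) (hpx : p x = s) :
    p (x - s • onesSeq) ≤ 0 := by
  refine eps_le fun ε hε => ?_
  obtain ⟨b, hb, hsb⟩ := exists_sA_lt x (show p x < s + ε by rw [hpx]; linarith)
  have h1 : p (x - s • onesSeq) ≤ sA (x - s • onesSeq) b := p_le_sA' _ hb
  have h2 : sA (x - s • onesSeq) b ≤ ε := by
    refine sA_le _ _ fun n => ?_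
    rw [avg_sub_smul_ones x s hb n]
    have := (avg_le_sA x b n).trans hsb.le
    linarith
  linarith

end AlmostConv

open AlmostConv in
/-- (Lorentz) A bounded sequence `x` is almost convergent to `s` (i.e. `L x = s` for every
Banach limit `L`) if and only if the averages `(1/m) ∑_{j<m} x_{n+j}` converge to `s`
uniformly in `n`. -/
theorem almost_convergent_iff_uniform_cesaro (x : Linf) (s : ℝ) :
    (∀ L : StrongDual ℝ Linf, IsBanachLimit L → L x = s) ↔
    ∀ ε > (0:ℝ), ∃ M : ℕ, ∀ m ≥ M, ∀ n : ℕ,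
      |(∑ j ∈ Finset.range m, x (n + j)) / m - s| < ε := by
  constructor
  · -- forward direction
    intro h ε hε
    have hpx : p x = s := by
      obtain ⟨L, hL, hLx⟩ := exists_banachLimit_eq x
      rw [← hLx, h L hL]
    have hpnx : p (-x) = -s := by
      obtain ⟨L, hL, hLx⟩ := exists_banachLimit_eq (-x)
      rw [← hLx, map_neg, h L hL]
    set y := x - s • onesSeq with hy
    have hy1 : p y ≤ 0 := p_sub_smul_ones_nonpos x s hpx
    have hy2 : p (-y) ≤ 0 := by
      have hyy : -y = (-x) - (-s) • onesSeq := by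
        rw [hy, neg_smul, sub_neg_eq_add, neg_sub]
        abel
      rw [hyy]
      exact p_sub_smul_ones_nonpos (-x) (-s) hpnx
    obtain ⟨M₁, hM₁1, hM₁⟩ := uniform_avg_lt y hy1 hε
    obtain ⟨M₂, hM₂1, hM₂⟩ := uniform_avg_lt (-y) hy2 hε
    refine ⟨max M₁ M₂, fun m hm n => ?_⟩
    have hm1 : 0 < m := lt_of_lt_of_le (lt_of_lt_of_le Nat.zero_lt_one hM₁1)
      (le_trans (le_max_left _ _) hm)
    have key1 : avg y m n < ε := hM₁ m (le_trans (le_max_left _ _) hm) n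
    have key2 : avg (-y) m n < ε := hM₂ m (le_trans (le_max_right _ _) hm) n
    have havg : avg y m n = avg x m n - s := avg_sub_smul_ones x s hm1 n
    rw [avg_neg, havg] at key2
    rw [havg] at key1
    have hgoal : (∑ j ∈ Finset.range m, x (n + j)) / (m:ℝ) - s = avg x m n - s := rfl
    rw [abs_lt, hgoal]
    constructor <;> linarith
  · -- reverse direction
    intro h L hL
    obtain ⟨hpos, hshift, hone⟩ := hL
    have hbnd : ∀ w : Linf, |L w| ≤ ‖w‖ := by
      have haux : ∀ w : Linf, L w ≤ ‖w‖ := by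
        intro w
        have hnn : ∀ n, 0 ≤ (‖w‖ • onesSeq - w) n := by
          intro n
          have := (abs_le.1 (abs_coe_le w n)).2
          simp only [lp.coeFn_sub, lp.coeFn_smul, Pi.sub_apply, Pi.smul_apply,
            onesSeq_apply, smul_eq_mul, mul_one]
          linarith
        have hp := hpos _ hnn
        rw [map_sub, map_smul] at hp
        rw [hone] at hp
        simp only [smul_eq_mul, mul_one] at hp
        linarith
      intro w
      rw [abs_le]
      refine ⟨?_, haux w⟩
      have := haux (-w)
      rw [map_neg, norm_neg] at this
      linarith
    have hiter_app : ∀ (k : ℕ) (y : Linf) (n : ℕ), (shiftSeq^[k] y) n = y (n + k) := by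
      intro k
      induction k with
      | zero => intro y n; simp
      | succ k ih =>
          intro y n
          rw [Function.iterate_succ_apply, ih (shiftSeq y) n, shiftSeq_apply,
            Nat.add_assoc]
    have hiter_L : ∀ (k : ℕ) (y : Linf), L (shiftSeq^[k] y) = L y := by
      intro k
      induction k with
      | zero => intro y; simp
      | succ k ih =>
          intro y
          rw [Function.iterate_succ_apply, ih (shiftSeq y), hshift]
    have key : ∀ ε > (0:ℝ), |L x - s| ≤ ε := by
      intro ε hε
      obtain ⟨M, hM⟩ := h ε hε
      set m := M + 1 with hmdef
      have hmM : m ≥ M := Nat.le_succ M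
      have hm0 : (0:ℝ) < m := by positivity
      set z : Linf := ∑ k ∈ Finset.range m, shiftSeq^[k] x with hz
      have hLz : L z = (m:ℝ) * L x := by
        rw [hz, map_sum]
        rw [Finset.sum_congr rfl fun k _ => hiter_L k x]
        rw [Finset.sum_const, Finset.card_range, nsmul_eq_mul]
      have hzn : ∀ n, z n = ∑ k ∈ Finset.range m, x (n + k) := by
        intro n
        rw [hz, lp.coeFn_sum]
        rw [Finset.sum_apply]
        exact Finset.sum_congr rfl fun k _ => hiter_app k x n
      set w : Linf := z - ((m:ℝ) * s) • onesSeq with hw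
      have hwn : ∀ n, |w n| ≤ (m:ℝ) * ε := by
        intro n
        have hcoe : w n = (∑ k ∈ Finset.range m, x (n + k)) - (m:ℝ) * s := by
          rw [hw]
          simp only [lp.coeFn_sub, lp.coeFn_smul, Pi.sub_apply, Pi.smul_apply,
            onesSeq_apply, smul_eq_mul, mul_one]
          rw [hzn n]
        have havg := hM m hmM n
        have hfact : (∑ k ∈ Finset.range m, x (n + k)) - (m:ℝ) * s
            = (m:ℝ) * ((∑ j ∈ Finset.range m, x (n + j)) / m - s) := by
          field_simp
        rw [hcoe, hfact, abs_mul, abs_of_pos hm0]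
        exact mul_le_mul_of_nonneg_left havg.le hm0.le
      have hwnorm : ‖w‖ ≤ (m:ℝ) * ε := by
        rw [lp.norm_eq_ciSup]
        refine ciSup_le fun n => ?_
        rw [Real.norm_eq_abs]
        exact hwn n
      have hLw : L w = (m:ℝ) * (L x - s) := by
        rw [hw, map_sub, map_smul, hLz, hone]
        simp only [smul_eq_mul, mul_one]
        ring
      have hfin := (hbnd w).trans hwnorm
      rw [hLw, abs_mul, abs_of_pos hm0] at hfin
      exact le_of_mul_le_mul_left hfin hm0
    have habs : |L x - s| ≤ 0 := eps_le fun ε hε => by rw [zero_add]; exact key ε hε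
    have hz := abs_nonpos_iff.1 habs
    linarith [sub_eq_zero.1 hz]

end
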